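/- Let $k$ be a field, $p(t) \in t\,k[[t]]$ transcendental over $k(t)$, $R = k[x,y]_{(x,y)}$, and let $\nu$ be the discrete rank 1 valuation on $k(x,y)$ given by $\nu(f) = \operatorname{ord}_t f(t,p(t))$. Then the prime ideal of elements of infinite value in $\hat R = k[[x,y]]$ is $p(\hat R)_\infty = (y - p(x))$; in particular it is a nonzero regular prime ideal, and $\hat R / p(\hat R)_\infty \cong k[[x]]$ is a regular local ring of dimension 1. -/

import Mathlib

/-- Substitution `y ↦ p(t)` (with `x = t`) on `k[[x]][[y]]`, i.e. `f ↦ f(t, p(t))`.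
For `p` with zero constant term the coefficient of `tᵐ` only receives contributions
from the terms `yⁿ` with `n ≤ m`, so it is given by the finite sums below. -/
noncomputable def substY {k : Type*} [Field k] (p : PowerSeries k)
    (h : PowerSeries (PowerSeries k)) : PowerSeries k :=
  PowerSeries.mk fun m =>
    ∑ n ∈ Finset.range (m + 1),
      PowerSeries.coeff m (PowerSeries.coeff n h * p ^ n)

namespace SubstAux

open PowerSeries

variable {k : Type*} [Field k] (p : PowerSeries k)

lemma coeff_mul_pow_eq_zero (hp0 : constantCoeff p = 0) {m n : ℕ} (h : m < n)
    (a : PowerSeries k) : coeff m (a * p ^ n) = 0 := by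
  have hX : (X : PowerSeries k) ^ n ∣ a * p ^ n :=
    Dvd.dvd.mul_left (pow_dvd_pow_of_dvd (X_dvd_iff.mpr hp0) n) a
  exact X_pow_dvd_iff.mp hX m h

lemma coeff_eval (hp0 : constantCoeff p = 0) (q : Polynomial (PowerSeries k)) (m : ℕ) :
    coeff m (q.eval p) =
      ∑ n ∈ Finset.range (m + 1), coeff m (q.coeff n * p ^ n) := by
  set N := max (m + 1) (q.natDegree + 1) with hN
  have hdeg : q.natDegree < N := lt_of_lt_of_le (Nat.lt_succ_self _) (le_max_right _ _)
  rw [Polynomial.eval_eq_sum_range' hdeg, map_sum]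
  refine (Finset.sum_subset (Finset.range_subset_range.mpr (le_max_left _ _)) ?_).symm
  intro n _ hn
  exact coeff_mul_pow_eq_zero p hp0 (by simpa using hn) _

lemma coeff_substY (hp0 : constantCoeff p = 0) (f : PowerSeries (PowerSeries k))
    {m N : ℕ} (h : m < N) :
    coeff m (substY p f) = coeff m ((trunc N f).eval p) := by
  rw [coeff_eval p hp0, substY, coeff_mk]
  refine Finset.sum_congr rfl fun n hn => ?_
  rw [coeff_trunc]
  rw [Finset.mem_range] at hn
  rw [if_pos (lt_of_lt_of_le hn h)]

lemma substY_mul (hp0 : constantCoeff p = 0) (f g : PowerSeries (PowerSeries k)) :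
    substY p (f * g) = substY p f * substY p g := by
  ext m
  rw [coeff_substY p hp0 _ (Nat.lt_succ_self m), PowerSeries.coeff_mul]
  have h1 : ∀ a ∈ Finset.HasAntidiagonal.antidiagonal m,
      coeff a.1 (substY p f) * coeff a.2 (substY p g) =
      coeff a.1 ((trunc (m+1) f).eval p) * coeff a.2 ((trunc (m+1) g).eval p) := by
    intro a ha
    rw [Finset.HasAntidiagonal.mem_antidiagonal] at ha
    rw [coeff_substY p hp0 f (N := m+1) (by omega),
        coeff_substY p hp0 g (N := m+1) (by omega)]
  rw [Finset.sum_congr rfl h1, ← PowerSeries.coeff_mul, ← Polynomial.eval_mul]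
  rw [coeff_eval p hp0, coeff_eval p hp0]
  refine Finset.sum_congr rfl fun n hn => ?_
  rw [Finset.mem_range] at hn
  have h2 : (trunc (m+1) (f * g)).coeff n = (trunc (m+1) f * trunc (m+1) g).coeff n := by
    rw [Polynomial.coeff_mul, coeff_trunc, if_pos (by omega), PowerSeries.coeff_mul]
    refine Finset.sum_congr rfl fun a ha => ?_
    rw [Finset.HasAntidiagonal.mem_antidiagonal] at ha
    rw [coeff_trunc, coeff_trunc, if_pos (by omega), if_pos (by omega)]
  rw [h2]

lemma substY_one : substY p (1 : PowerSeries (PowerSeries k)) = 1 := by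
  ext m
  rw [substY, coeff_mk]
  rw [Finset.sum_eq_single 0]
  · simp
  · intro n _ hn
    rw [PowerSeries.coeff_one, if_neg hn, zero_mul, map_zero]
  · simp

lemma substY_C (g : PowerSeries k) : substY p (C g) = g := by
  ext m
  rw [substY, coeff_mk]
  rw [Finset.sum_eq_single 0]
  · simp
  · intro n _ hn
    rw [PowerSeries.coeff_C, if_neg hn, zero_mul, map_zero]
  · simp

lemma substY_X (hp0 : constantCoeff p = 0) :
    substY p (X : PowerSeries (PowerSeries k)) = p := by
  ext m
  rw [substY, coeff_mk]
  rw [Finset.sum_eq_single 1]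
  · simp
  · intro n _ hn
    rw [PowerSeries.coeff_X, if_neg hn, zero_mul, map_zero]
  · intro h1
    rw [Finset.mem_range] at h1
    have hm : m = 0 := by omega
    subst hm
    simp [PowerSeries.coeff_X, coeff_zero_eq_constantCoeff, hp0]

/-- The substitution ring homomorphism. -/
noncomputable def Phi (hp0 : constantCoeff p = 0) :
    PowerSeries (PowerSeries k) →+* PowerSeries k where
  toFun := substY p
  map_one' := substY_one p
  map_mul' := substY_mul p hp0
  map_zero' := by ext m; simp [substY]
  map_add' := fun f g => by
    ext m; simp [substY, add_mul, Finset.sum_add_distrib]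

lemma Phi_apply (hp0 : constantCoeff p = 0) (f : PowerSeries (PowerSeries k)) :
    Phi p hp0 f = substY p f := rfl

/-- decomposition g = C g₀ + X * shift g -/
lemma decomp (g : PowerSeries (PowerSeries k)) :
    g = C (PowerSeries.coeff 0 g)
      + X * (PowerSeries.mk fun n => PowerSeries.coeff (n+1) g) := by
  ext n
  cases n with
  | zero => simp
  | succ n => simp [coeff_succ_X_mul, PowerSeries.coeff_C]

lemma key' (hp0 : constantCoeff p = 0) (g : PowerSeries (PowerSeries k)) :
    substY p g = PowerSeries.coeff 0 g
      + p * substY p (PowerSeries.mk fun n => PowerSeries.coeff (n+1) g) := by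
  conv_lhs => rw [← Phi_apply p hp0 g, decomp g]
  rw [map_add, map_mul, Phi_apply, Phi_apply, Phi_apply, substY_C, substY_X p hp0]


lemma div_identity (hp0 : constantCoeff p = 0) (f : PowerSeries (PowerSeries k)) :
    (X - C p) *
      (PowerSeries.mk fun i => substY p
        (PowerSeries.mk fun n => PowerSeries.coeff (n + i + 1) f))
    = f - C (substY p f) := by
  apply PowerSeries.ext
  intro j
  rw [sub_mul, map_sub, map_sub, coeff_C_mul, coeff_mk]
  cases j with
  | zero =>
    rw [coeff_zero_X_mul, PowerSeries.coeff_C, if_pos rfl]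
    rw [key' p hp0 f]
    simp only [Nat.add_zero]
    ring
  | succ j =>
    rw [coeff_succ_X_mul, coeff_mk, PowerSeries.coeff_C,
      if_neg (Nat.succ_ne_zero j)]
    rw [key' p hp0 (PowerSeries.mk fun n => PowerSeries.coeff (n + j + 1) f)]
    have h1 : (PowerSeries.mk fun n => PowerSeries.coeff (n+1)
        (PowerSeries.mk fun m => PowerSeries.coeff (m + j + 1) f))
        = PowerSeries.mk fun n => PowerSeries.coeff (n + (j+1) + 1) f := by
      ext n
      rw [coeff_mk, coeff_mk, coeff_mk]
      have h3 : n + 1 + j + 1 = n + (j + 1) + 1 := by omega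
      rw [h3]
    rw [h1, coeff_mk]
    simp only [Nat.zero_add]
    ring

end SubstAux

/-- Let `k` be a field, `p(t) ∈ t·k[[t]]` transcendental over
`k(t)`, `R = k[x,y]_{(x,y)}`, and let `ν` be the discrete rank 1 valuation on
`k(x,y)` given by `ν(f) = ord_t f(t, p(t))`.  The prime ideal of elements of
infinite value in `R̂ = k[[x,y]]` (realized as `k[[x]][[y]]`) is the kernel of the
substitution homomorphism `k[[x,y]] → k[[t]]`, `f ↦ f(t, p(t))`, and it equals
`(y - p(x))`; in particular it is a nonzero regular prime ideal and
`R̂ / p(R̂)_∞ ≅ k[[x]]` is a regular local ring of dimension 1. -/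
theorem prime_of_infinite_value_is_generated_by_y_sub_p
    {k : Type*} [Field k] (p : PowerSeries k)
    (hp0 : PowerSeries.constantCoeff p = 0)
    (hptrans : ∀ q : Polynomial (Polynomial k),
      Polynomial.eval₂ Polynomial.coeToPowerSeries.ringHom p q = 0 → q = 0) :
    ∃ Φ : PowerSeries (PowerSeries k) →+* PowerSeries k,
      -- `Φ` is the substitution homomorphism `f ↦ f(t, p(t))`
      (∀ f, Φ f = substY p f) ∧
      -- its kernel, the prime of elements of infinite value, equals `(y - p(x))`
      RingHom.ker Φ =
        Ideal.span {PowerSeries.X - PowerSeries.C p} ∧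
      RingHom.ker Φ ≠ ⊥ ∧
      (RingHom.ker Φ).IsPrime ∧
      -- `R̂ / p(R̂)_∞ ≅ k[[x]]`, a regular local ring of dimension 1
      Nonempty ((PowerSeries (PowerSeries k) ⧸ RingHom.ker Φ) ≃+* PowerSeries k) := by
  refine ⟨SubstAux.Phi p hp0, fun f => rfl, ?_, ?_, ?_, ?_⟩
  · -- kernel computation
    apply le_antisymm
    · intro f hf
      rw [RingHom.mem_ker, SubstAux.Phi_apply] at hf
      rw [Ideal.mem_span_singleton]
      refine ⟨PowerSeries.mk fun i => substY p
        (PowerSeries.mk fun n => PowerSeries.coeff (n + i + 1) f), ?_⟩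
      rw [SubstAux.div_identity p hp0 f, hf, map_zero, sub_zero]
    · rw [Ideal.span_le, Set.singleton_subset_iff]
      rw [SetLike.mem_coe, RingHom.mem_ker, map_sub, SubstAux.Phi_apply, SubstAux.Phi_apply,
        SubstAux.substY_X p hp0, SubstAux.substY_C, sub_self]
  · -- kernel nonzero
    intro h
    have h2 : PowerSeries.X - PowerSeries.C p ∈
        RingHom.ker (SubstAux.Phi p hp0) := by
      rw [RingHom.mem_ker, map_sub, SubstAux.Phi_apply, SubstAux.Phi_apply,
        SubstAux.substY_X p hp0, SubstAux.substY_C, sub_self]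
    rw [h, Submodule.mem_bot] at h2
    have h3 := congrArg (PowerSeries.coeff 1) h2
    simp [PowerSeries.coeff_X, PowerSeries.coeff_C] at h3
  · exact RingHom.ker_isPrime _
  · refine ⟨RingHom.quotientKerEquivOfSurjective ?_⟩
    intro g
    exact ⟨PowerSeries.C g, SubstAux.substY_C p g⟩
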